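/- There exist universal constants c > 0 and δ₀ > 0 such that for all integers m, M with m < M, every subset S ⊆ {1,...,M} with |S| = m, and every δ ∈ (0, δ₀), it holds that d_TV(U_M, U_M^{S, δ/√m}) ≥ c·δ. -/

import Mathlib

open Finset

/-- The uniform distribution `U_M` on `{0,1}^M`. -/
noncomputable def uniformPMF (M : ℕ) (_x : Fin M → Bool) : ℝ := 1 / (2 : ℝ) ^ M

/-- The product distribution `U_M^{S,η}` on `{0,1}^M`: coordinate `i` has mean `1/2 + η`
if `i ∈ S` and mean `1/2` otherwise. -/
noncomputable def prodPMF (M : ℕ) (S : Finset (Fin M)) (η : ℝ) (x : Fin M → Bool) : ℝ :=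
  ∏ i : Fin M, if i ∈ S then (if x i then 1 / 2 + η else 1 / 2 - η) else (1 / 2 : ℝ)

/-- Total variation distance between pmfs on `{0,1}^M`. -/
noncomputable def dTVCube (M : ℕ) (P Q : (Fin M → Bool) → ℝ) : ℝ :=
  (∑ x : Fin M → Bool, |P x - Q x|) / 2

namespace TVAux

/-- number of `true` coordinates of `x` inside `S` -/
def cnt {M : ℕ} (S : Finset (Fin M)) (x : Fin M → Bool) : ℕ :=
  (S.filter fun i => x i = true).card

lemma cnt_le {M : ℕ} (S : Finset (Fin M)) (x : Fin M → Bool) : cnt S x ≤ S.card :=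
  Finset.card_filter_le _ _

/-- the binomial tail-type function -/
noncomputable def fBin (m t : ℕ) (p : ℝ) : ℝ :=
  ∑ k ∈ Finset.Icc t m, (m.choose k : ℝ) * (p ^ k * (1 - p) ^ (m - k))

lemma fiber_card {M : ℕ} (S : Finset (Fin M)) (k : ℕ) :
    (Finset.univ.filter fun x : Fin M → Bool => cnt S x = k).card
      = S.card.choose k * 2 ^ (M - S.card) := by
  have h : (Finset.univ.filter fun x : Fin M → Bool => cnt S x = k).card
      = ((S.powersetCard k) ×ˢ Sᶜ.powerset).card := by
    apply Finset.card_nbij'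
      (i := fun x => (S.filter fun i => x i = true, Sᶜ.filter fun i => x i = true))
      (j := fun P i => decide (i ∈ P.1 ∨ i ∈ P.2))
    · intro x hx
      simp only [Finset.mem_coe, Finset.mem_filter, Finset.mem_univ, true_and] at hx
      simp only [Finset.mem_coe, Finset.mem_product, Finset.mem_powersetCard, Finset.mem_powerset]
      exact ⟨⟨Finset.filter_subset _ _, hx⟩, Finset.filter_subset _ _⟩
    · intro P hP
      simp only [Finset.mem_coe, Finset.mem_product, Finset.mem_powersetCard, Finset.mem_powerset] at hP
      obtain ⟨⟨hP1, hP1c⟩, hP2⟩ := hP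
      simp only [Finset.mem_coe, Finset.mem_filter, Finset.mem_univ, true_and]
      simp only [cnt]
      have : (S.filter fun i => decide (i ∈ P.1 ∨ i ∈ P.2) = true) = P.1 := by
        ext i
        simp only [Finset.mem_filter, decide_eq_true_eq]
        constructor
        · rintro ⟨hiS, hi1 | hi2⟩
          · exact hi1
          · exact absurd hiS (Finset.mem_compl.mp (hP2 hi2))
        · intro h1; exact ⟨hP1 h1, Or.inl h1⟩
      rw [this, hP1c]
    · intro x _
      funext i
      by_cases hiS : i ∈ S <;> cases hxi : x i <;>
        simp [Finset.mem_filter, hiS, hxi]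
    · intro P hP
      simp only [Finset.mem_coe, Finset.mem_product, Finset.mem_powersetCard, Finset.mem_powerset] at hP
      obtain ⟨⟨hP1, _⟩, hP2⟩ := hP
      have e1 : (S.filter fun i => decide (i ∈ P.1 ∨ i ∈ P.2) = true) = P.1 := by
        ext i
        simp only [Finset.mem_filter, decide_eq_true_eq]
        constructor
        · rintro ⟨hiS, hi1 | hi2⟩
          · exact hi1
          · exact absurd hiS (Finset.mem_compl.mp (hP2 hi2))
        · intro h1; exact ⟨hP1 h1, Or.inl h1⟩
      have e2 : (Sᶜ.filter fun i => decide (i ∈ P.1 ∨ i ∈ P.2) = true) = P.2 := by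
        ext i
        simp only [Finset.mem_filter, decide_eq_true_eq, Finset.mem_compl]
        constructor
        · rintro ⟨hiS, hi1 | hi2⟩
          · exact absurd (hP1 hi1) hiS
          · exact hi2
        · intro h2; exact ⟨Finset.mem_compl.mp (hP2 h2), Or.inr h2⟩
      rw [Prod.ext_iff]
      exact ⟨e1, e2⟩
  rw [h, Finset.card_product, Finset.card_powersetCard, Finset.card_powerset,
    Finset.card_compl, Fintype.card_fin]

lemma sum_cube {M : ℕ} (S : Finset (Fin M)) (H : ℕ → ℝ) :
    (∑ x : Fin M → Bool, H (cnt S x))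
      = ∑ k ∈ Finset.range (S.card + 1),
          ((S.card.choose k * 2 ^ (M - S.card) : ℕ) : ℝ) * H k := by
  rw [← Finset.sum_fiberwise_of_maps_to
    (g := cnt S) (t := Finset.range (S.card + 1))
    (fun x _ => Finset.mem_range.mpr (Nat.lt_succ_of_le (cnt_le S x)))
    (fun x => H (cnt S x))]
  refine Finset.sum_congr rfl fun k _ => ?_
  have : ∀ x ∈ Finset.univ.filter fun x : Fin M → Bool => cnt S x = k,
      H (cnt S x) = H k := by
    intro x hx
    rw [(Finset.mem_filter.mp hx).2]
  rw [Finset.sum_congr rfl this, Finset.sum_const, fiber_card, nsmul_eq_mul]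

lemma prodPMF_eq {M : ℕ} (S : Finset (Fin M)) (η : ℝ) (x : Fin M → Bool) :
    prodPMF M S η x
      = (1/2 + η) ^ (cnt S x) * (1/2 - η) ^ (S.card - cnt S x) * (1/2 : ℝ) ^ (M - S.card) := by
  unfold prodPMF
  rw [← Finset.prod_mul_prod_compl S]
  have h1 : ∏ i ∈ S, (if i ∈ S then (if x i then 1/2 + η else 1/2 - η) else (1/2:ℝ))
      = (1/2 + η) ^ (cnt S x) * (1/2 - η) ^ (S.card - cnt S x) := by
    rw [Finset.prod_congr rfl (fun i hi => if_pos hi)]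
    have : ∀ i ∈ S, (if x i then (1/2 + η : ℝ) else 1/2 - η)
        = (if x i = true then (1/2 + η : ℝ) else 1/2 - η) := by intro i _; simp
    rw [Finset.prod_congr rfl this, Finset.prod_ite (fun _ => (1/2 + η : ℝ))
      (fun _ => (1/2 - η : ℝ)), Finset.prod_const, Finset.prod_const]
    have hcnt : (S.filter fun i => x i = true).card = cnt S x := rfl
    have hcard : (S.filter fun i => ¬ x i = true).card = S.card - cnt S x := by
      have := Finset.card_filter_add_card_filter_not
        (s := S) (p := fun i => x i = true)
      omega
    rw [hcnt, hcard]
  have h2 : ∏ i ∈ Sᶜ, (if i ∈ S then (if x i then 1/2 + η else 1/2 - η) else (1/2:ℝ))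
      = (1/2 : ℝ) ^ (M - S.card) := by
    rw [Finset.prod_congr rfl (fun i hi => if_neg (Finset.mem_compl.mp hi)),
      Finset.prod_const, Finset.card_compl, Fintype.card_fin]
  rw [h1, h2]

lemma uniform_eq_prod {M : ℕ} (S : Finset (Fin M)) :
    uniformPMF M = prodPMF M S 0 := by
  funext x
  rw [prodPMF_eq]
  have h1 : cnt S x ≤ S.card := cnt_le S x
  have h2 : S.card ≤ M := by
    have := Finset.card_le_univ S
    simpa [Fintype.card_fin] using this
  unfold uniformPMF
  rw [add_zero, sub_zero, ← pow_add, ← pow_add]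
  have hc : cnt S x + (S.card - cnt S x) + (M - S.card) = M := by
    have h0 : cnt S x = (S.filter fun i => x i = true).card := rfl
    omega
  rw [hc]
  simp [one_div, inv_pow]

lemma sum_event {M : ℕ} (S : Finset (Fin M)) (η : ℝ) (t : ℕ) :
    ∑ x ∈ Finset.univ.filter (fun x : Fin M → Bool => t ≤ cnt S x), prodPMF M S η x
      = fBin S.card t (1/2 + η) := by
  have step2 := sum_cube S (fun k => if t ≤ k then (1/2 + η) ^ k * (1/2 - η) ^ (S.card - k)
          * (1/2 : ℝ) ^ (M - S.card) else 0)
  calc ∑ x ∈ Finset.univ.filter (fun x : Fin M → Bool => t ≤ cnt S x), prodPMF M S η x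
      = ∑ x : Fin M → Bool, (if t ≤ cnt S x then prodPMF M S η x else 0) :=
        Finset.sum_filter _ _
    _ = ∑ x : Fin M → Bool, (if t ≤ cnt S x then (1/2 + η) ^ (cnt S x)
          * (1/2 - η) ^ (S.card - cnt S x) * (1/2 : ℝ) ^ (M - S.card) else 0) :=
        Finset.sum_congr rfl (fun x _ => by
          by_cases h : t ≤ cnt S x <;> simp [h, prodPMF_eq])
    _ = ∑ k ∈ Finset.range (S.card + 1),
          ((S.card.choose k * 2 ^ (M - S.card) : ℕ) : ℝ) *
          (if t ≤ k then (1/2 + η) ^ k * (1/2 - η) ^ (S.card - k)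
            * (1/2 : ℝ) ^ (M - S.card) else 0) := step2
    _ = ∑ k ∈ Finset.range (S.card + 1),
          (if t ≤ k then (S.card.choose k : ℝ) *
            ((1/2 + η) ^ k * (1 - (1/2 + η)) ^ (S.card - k)) else 0) := by
        refine Finset.sum_congr rfl fun k _ => ?_
        by_cases h : t ≤ k
        · simp only [h, if_true]
          push_cast
          have h3 : ((2:ℝ)) ^ (M - S.card) * (1/2 : ℝ) ^ (M - S.card) = 1 := by
            rw [← mul_pow]; norm_num
          have h4 : (1 - (1/2 + η) : ℝ) = 1/2 - η := by ring
          rw [h4]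
          linear_combination (((S.card).choose k : ℝ) * ((1/2 + η) ^ k * (1/2 - η) ^ (S.card - k))) * h3
        · simp [h]
    _ = fBin S.card t (1/2 + η) := by
        rw [← Finset.sum_filter]
        unfold fBin
        congr 1
        ext k
        simp only [Finset.mem_filter, Finset.mem_range, Finset.mem_Icc]
        omega

lemma sum_total {M : ℕ} (S : Finset (Fin M)) (η : ℝ) :
    ∑ x : Fin M → Bool, prodPMF M S η x = 1 := by
  have step2 := sum_cube S (fun k => (1/2 + η) ^ k * (1/2 - η) ^ (S.card - k)
      * (1/2 : ℝ) ^ (M - S.card))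
  calc ∑ x : Fin M → Bool, prodPMF M S η x
      = ∑ x : Fin M → Bool, (1/2 + η) ^ (cnt S x) * (1/2 - η) ^ (S.card - cnt S x)
          * (1/2 : ℝ) ^ (M - S.card) :=
        Finset.sum_congr rfl (fun x _ => prodPMF_eq S η x)
    _ = ∑ k ∈ Finset.range (S.card + 1),
          ((S.card.choose k * 2 ^ (M - S.card) : ℕ) : ℝ) *
          ((1/2 + η) ^ k * (1/2 - η) ^ (S.card - k) * (1/2 : ℝ) ^ (M - S.card)) := step2
    _ = ∑ k ∈ Finset.range (S.card + 1),
          (1/2 + η) ^ k * (1/2 - η) ^ (S.card - k) * (S.card.choose k : ℝ) := by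
        refine Finset.sum_congr rfl fun k _ => ?_
        push_cast
        have h3 : ((2:ℝ)) ^ (M - S.card) * (1/2 : ℝ) ^ (M - S.card) = 1 := by
          rw [← mul_pow]; norm_num
        linear_combination (((S.card).choose k : ℝ) * ((1/2 + η) ^ k * (1/2 - η) ^ (S.card - k))) * h3
    _ = ((1/2 + η) + (1/2 - η)) ^ S.card := (add_pow _ _ _).symm
    _ = 1 := by norm_num

lemma tv_ge {M : ℕ} (P Q : (Fin M → Bool) → ℝ)
    (h : ∑ x : Fin M → Bool, P x = ∑ x : Fin M → Bool, Q x)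
    (A : Finset (Fin M → Bool)) :
    ∑ x ∈ A, (Q x - P x) ≤ dTVCube M P Q := by
  have htot : ∑ x ∈ A, (Q x - P x) + ∑ x ∈ Aᶜ, (Q x - P x) = 0 := by
    rw [Finset.sum_add_sum_compl, Finset.sum_sub_distrib, h, sub_self]
  have hA : ∑ x ∈ A, (Q x - P x) ≤ ∑ x ∈ A, |P x - Q x| :=
    Finset.sum_le_sum fun x _ => by
      rw [abs_sub_comm]; exact le_abs_self _
  have hAc : ∑ x ∈ Aᶜ, (P x - Q x) ≤ ∑ x ∈ Aᶜ, |P x - Q x| :=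
    Finset.sum_le_sum fun x _ => le_abs_self _
  have hsum : ∑ x ∈ A, |P x - Q x| + ∑ x ∈ Aᶜ, |P x - Q x|
      = ∑ x : Fin M → Bool, |P x - Q x| := Finset.sum_add_sum_compl A _
  have hAc' : - ∑ x ∈ Aᶜ, (Q x - P x) = ∑ x ∈ Aᶜ, (P x - Q x) := by
    rw [← Finset.sum_neg_distrib]
    exact Finset.sum_congr rfl fun x _ => by ring
  unfold dTVCube
  linarith

lemma hasDerivAt_fBin (m t : ℕ) (ht : 1 ≤ t) (htm : t ≤ m) (p : ℝ) :
    HasDerivAt (fBin m t)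
      ((m : ℝ) * ((m-1).choose (t-1) : ℝ) * (p ^ (t-1) * (1-p) ^ (m-t))) p := by
  set g : ℕ → ℝ := fun j => (m:ℝ) * ((m-1).choose j : ℝ) * (p^j * (1-p)^(m-1-j)) with hg
  have key : ∀ k ∈ Finset.Icc t m,
      HasDerivAt (fun q : ℝ => (m.choose k : ℝ) * (q^k * (1-q)^(m-k)))
        (g (k-1) - g k) p := by
    intro k hk
    rw [Finset.mem_Icc] at hk
    have hk1 : 1 ≤ k := le_trans ht hk.1
    have hkm : k ≤ m := hk.2
    have h1 : HasDerivAt (fun q : ℝ => q^k) ((k:ℝ) * p^(k-1)) p := hasDerivAt_pow k p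
    have hlin : HasDerivAt (fun q : ℝ => 1 - q) (-1) p := by
      simpa using (hasDerivAt_id p).const_sub 1
    have h2 : HasDerivAt (fun q : ℝ => (1-q)^(m-k))
        (((m-k : ℕ):ℝ) * (1-p)^(m-k-1) * (-1)) p :=
      (hasDerivAt_pow (m-k) (1-p)).comp p hlin
    have h3 := (h1.mul h2).const_mul (m.choose k : ℝ)
    convert h3 using 1
    · rfl
    · rfl
    · rfl
    -- real identity
    have idA : (m.choose k : ℝ) * (k : ℝ) = (m:ℝ) * ((m-1).choose (k-1) : ℝ) := by
      have hnat : m * (m-1).choose (k-1) = m.choose k * k := by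
        have := Nat.add_one_mul_choose_eq (m-1) (k-1)
        have hm1 : m - 1 + 1 = m := by omega
        have hk1' : k - 1 + 1 = k := by omega
        rw [hm1, hk1'] at this
        exact this
      exact_mod_cast hnat.symm
    have idB : (m.choose k : ℝ) * ((m-k : ℕ) : ℝ) = (m:ℝ) * ((m-1).choose k : ℝ) := by
      have hnat : m.choose k * (m - k) = m * (m-1).choose k := by
        have h5 := Nat.choose_succ_right_eq m k
        have h6 := Nat.add_one_mul_choose_eq (m-1) k
        have hm1 : m - 1 + 1 = m := by omega
        rw [hm1] at h6
        omega
      exact_mod_cast hnat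
    have e1 : m - k = m - 1 - (k-1) := by omega
    have e2 : m - k - 1 = m - 1 - k := by omega
    rw [hg]
    simp only []
    rw [← e1, ← e2]
    have expand : (m:ℝ) * ((m-1).choose (k-1) : ℝ) * (p^(k-1) * (1-p)^(m-k))
        - (m:ℝ) * ((m-1).choose k : ℝ) * (p^k * (1-p)^(m-k-1))
        = ((m.choose k : ℝ) * (k:ℝ)) * (p^(k-1) * (1-p)^(m-k))
          - ((m.choose k : ℝ) * ((m-k:ℕ):ℝ)) * (p^k * (1-p)^(m-k-1)) := by
      rw [idA, idB]
    rw [expand]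
    ring
  have hsum := HasDerivAt.fun_sum key
  have htel : ∑ k ∈ Finset.Icc t m, (g (k-1) - g k) = g (t-1) := by
    rw [← Finset.Ico_add_one_right_eq_Icc, Finset.sum_Ico_eq_sum_range]
    have hcongr : ∀ i ∈ Finset.range (m + 1 - t),
        g (t + i - 1) - g (t + i) = (fun i => g (t - 1 + i)) i - (fun i => g (t - 1 + i)) (i+1) := by
      intro i _
      have e1 : t + i - 1 = t - 1 + i := by omega
      have e2 : t + i = t - 1 + (i + 1) := by omega
      rw [e1, e2]
    rw [Finset.sum_congr rfl hcongr, Finset.sum_range_sub' (fun i => g (t - 1 + i))]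
    have e3 : t - 1 + (m + 1 - t) = m := by omega
    rw [e3]
    have hgm : g m = 0 := by
      rw [hg]
      simp only []
      rw [Nat.choose_eq_zero_of_lt (by omega : m - 1 < m)]
      simp
    rw [hgm, sub_zero, Nat.add_zero]
  rw [htel] at hsum
  have e4 : m - 1 - (t-1) = m - t := by omega
  have : g (t-1) = (m : ℝ) * ((m-1).choose (t-1) : ℝ) * (p ^ (t-1) * (1-p) ^ (m-t)) := by
    rw [hg]; simp only []; rw [e4]
  rw [this] at hsum
  exact hsum

lemma incr (m t : ℕ) (ht : 1 ≤ t) (htm : t ≤ m) (η : ℝ) (hη : 0 < η) :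
    ∃ c ∈ Set.Ioo (1/2:ℝ) (1/2+η),
      fBin m t (1/2+η) - fBin m t (1/2)
        = η * ((m : ℝ) * ((m-1).choose (t-1) : ℝ) * (c ^ (t-1) * (1-c) ^ (m-t))) := by
  have hd : ∀ p : ℝ, HasDerivAt (fBin m t)
      ((m : ℝ) * ((m-1).choose (t-1) : ℝ) * (p ^ (t-1) * (1-p) ^ (m-t))) p :=
    hasDerivAt_fBin m t ht htm
  have hab : (1/2 : ℝ) < 1/2 + η := by linarith
  have hcont : ContinuousOn (fBin m t) (Set.Icc (1/2) (1/2+η)) :=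
    (Differentiable.continuous fun x => (hd x).differentiableAt).continuousOn
  obtain ⟨c, hc, hce⟩ := exists_deriv_eq_slope (fBin m t) hab hcont
    (fun x _ => (hd x).differentiableAt.differentiableWithinAt)
  refine ⟨c, hc, ?_⟩
  rw [(hd c).deriv] at hce
  have hne : (1/2 + η - 1/2 : ℝ) = η := by ring
  rw [hne, eq_div_iff (ne_of_gt hη)] at hce
  linarith [hce]

lemma nat_central (r : ℕ) (hr : 1 ≤ r) :
    16 ^ r ≤ 4 * r * (Nat.centralBinom r)^2 := by
  induction r with
  | zero => omega
  | succ n ih =>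
    rcases Nat.eq_zero_or_pos n with hn | hn
    · subst hn; decide
    · have ihn := ih hn
      have h := Nat.succ_mul_centralBinom_succ n
      have hstep : 16 ^ (n+1) * (n+1) ≤ (4 * (n+1) * (Nat.centralBinom (n+1))^2) * (n+1) := by
        have expand : (4 * (n+1) * (Nat.centralBinom (n+1))^2) * (n+1)
            = 4 * ((n+1) * Nat.centralBinom (n+1))^2 := by ring
        rw [expand, h]
        have e2 : 4 * (2 * (2*n+1) * Nat.centralBinom n)^2
            = 16 * ((2*n+1)^2 * (Nat.centralBinom n)^2) := by ring
        rw [e2]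
        calc 16 ^ (n+1) * (n+1) = 16 * (16^n * (n+1)) := by ring
          _ ≤ 16 * ((4 * n * (Nat.centralBinom n)^2) * (n+1)) := by
              apply Nat.mul_le_mul_left
              exact Nat.mul_le_mul_right _ ihn
          _ ≤ 16 * ((2*n+1)^2 * (Nat.centralBinom n)^2) := by
              apply Nat.mul_le_mul_left
              have : 4 * n * (n+1) ≤ (2*n+1)^2 := by nlinarith
              nlinarith [sq_nonneg (Nat.centralBinom n)]
      exact Nat.le_of_mul_le_mul_right hstep (by omega)

lemma central_sqrt (r : ℕ) (hr : 1 ≤ r) :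
    (4:ℝ) ^ r ≤ 2 * Real.sqrt r * ((2*r).choose r : ℝ) := by
  have h := nat_central r hr
  have hcb : Nat.centralBinom r = (2*r).choose r := Nat.centralBinom_eq_two_mul_choose r
  rw [hcb] at h
  have hR : (16:ℝ)^r ≤ 4 * r * ((2*r).choose r : ℝ)^2 := by exact_mod_cast h
  have hrpos : (0:ℝ) < r := by exact_mod_cast hr
  have hsq : (2 * Real.sqrt r * ((2*r).choose r : ℝ))^2
      = 4 * r * ((2*r).choose r : ℝ)^2 := by
    have : Real.sqrt r ^ 2 = r := Real.sq_sqrt (le_of_lt hrpos)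
    nlinarith [this]
  have h4 : ((4:ℝ)^r)^2 = 16^r := by
    rw [← pow_mul, mul_comm r 2, pow_mul]
    norm_num
  apply le_of_pow_le_pow_left₀ (n := 2) (by norm_num)
  · positivity
  · rw [hsq, h4]; exact hR

lemma central_real (m : ℕ) (hm : 1 ≤ m) :
    (2:ℝ)^(m-1) ≤ 2 * Real.sqrt m * ((m-1).choose (m/2) : ℝ) := by
  obtain ⟨r, hr | hr⟩ := Nat.even_or_odd' m
  · -- m = 2r
    have hr1 : 1 ≤ r := by omega
    subst hr
    have hpascal : (2*r).choose r = 2 * ((2*r-1).choose r) := by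
      obtain ⟨s, rfl⟩ : ∃ s, r = s + 1 := ⟨r-1, by omega⟩
      have h2r : 2*(s+1) = (2*s+1) + 1 := by ring
      have hstep : (2*(s+1)).choose (s+1) = (2*s+1).choose s + (2*s+1).choose (s+1) := by
        rw [h2r, Nat.choose_succ_succ]
      have hsymm : (2*s+1).choose s = (2*s+1).choose (s+1) := by
        have hcs := Nat.choose_symm (by omega : s+1 ≤ 2*s+1)
        rw [show 2*s+1 - (s+1) = s by omega] at hcs
        exact hcs
      have e : 2*(s+1) - 1 = 2*s+1 := by omega
      rw [hstep, hsymm, e]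
      omega
    have h := central_sqrt r hr1
    rw [hpascal] at h
    push_cast at h
    have hsqrt : Real.sqrt r ≤ Real.sqrt (2*r) := by
      apply Real.sqrt_le_sqrt
      push_cast
      linarith [show (0:ℝ) ≤ r by positivity]
    have hc : (0:ℝ) ≤ ((2*r-1).choose r : ℝ) := by positivity
    have e2 : 2*r - 1 = 2*r - 1 := rfl
    have hm2 : (2*r)/2 = r := by omega
    rw [hm2]
    have hpow : (2:ℝ)^(2*r-1) * 2 = 4^r := by
      rw [show (4:ℝ) = 2^2 by norm_num, ← pow_mul]
      rw [← pow_succ]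
      congr 1
      omega
    have hcast : ((2*r : ℕ) : ℝ) = 2*(r:ℝ) := by push_cast; ring
    rw [hcast]
    nlinarith [h, hsqrt, hc, Real.sqrt_nonneg (r:ℝ), Real.sqrt_nonneg (2*(r:ℝ))]
  · -- m = 2r+1
    subst hr
    rcases Nat.eq_zero_or_pos r with hr0 | hr1
    · subst hr0; norm_num
    · have h := central_sqrt r hr1
      have hm1 : 2*r+1-1 = 2*r := by omega
      have hm2 : (2*r+1)/2 = r := by omega
      rw [hm1, hm2]
      have hpow : (2:ℝ)^(2*r) = 4^r := by
        rw [show (4:ℝ) = 2^2 by norm_num, ← pow_mul]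
      rw [hpow]
      have hsqrt : Real.sqrt r ≤ Real.sqrt ((2*r+1 : ℕ) : ℝ) := by
        apply Real.sqrt_le_sqrt
        push_cast
        linarith [show (0:ℝ) ≤ r by positivity]
      have hc : (0:ℝ) ≤ ((2*r).choose r : ℝ) := by positivity
      nlinarith [h, hsqrt, hc]

set_option maxHeartbeats 1000000 in
lemma deriv_lb (m a b : ℕ) (hm : 1 ≤ m) (hA : a = m/2) (hB : b = m - (m/2+1))
    (η δ : ℝ) (hδ : 0 < δ) (hδ2 : δ < 1/2)
    (hη : η = δ / Real.sqrt m) (c : ℝ) (hc : c ∈ Set.Ioo (1/2:ℝ) (1/2+η)) :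
    Real.sqrt m / 8
      ≤ (m : ℝ) * (((m-1).choose a) : ℝ) * (c ^ a * (1-c) ^ b) := by
  obtain ⟨hc1, hc2⟩ := hc
  have hmR : (1:ℝ) ≤ m := by exact_mod_cast hm
  have hsm : (0:ℝ) < Real.sqrt m := Real.sqrt_pos.mpr (by linarith)
  have hsm1 : (1:ℝ) ≤ Real.sqrt m := by
    rw [show (1:ℝ) = Real.sqrt 1 by simp]
    exact Real.sqrt_le_sqrt hmR
  have hηpos : 0 < η := by rw [hη]; positivity
  have hηle : η < 1/2 := by
    rw [hη]
    calc δ / Real.sqrt m ≤ δ / 1 := by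
          apply div_le_div_of_nonneg_left (le_of_lt hδ) (by norm_num) hsm1
      _ = δ := by ring
      _ < 1/2 := hδ2
  have h1c : 0 < 1 - c := by nlinarith
  have hcpos : 0 < c := by linarith
  have hmη : (m:ℝ) * η^2 = δ^2 := by
    rw [hη, div_pow, Real.sq_sqrt (by linarith : (0:ℝ) ≤ m)]
    field_simp
  -- structure facts
  obtain ⟨e, hae, he1⟩ : ∃ e, a = b + e ∧ e ≤ 1 := ⟨a - b, by omega, by omega⟩
  have hm1ab : m - 1 = a + b := by omega
  have h2b : 2 * b ≤ m := by omega
  -- c(1-c) ≥ 1/4 - η²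
  have key1 : (1/4 : ℝ) - η^2 ≤ c * (1-c) := by nlinarith [sq_nonneg (c - 1/2)]
  have hquarter : (0:ℝ) < 1/4 - η^2 := by nlinarith
  -- Bernoulli
  have key2 : (1:ℝ)/2 ≤ (1 - 4*η^2)^b := by
    have hber := one_add_mul_le_pow (a := -4*η^2) (by nlinarith : (-2:ℝ) ≤ -4*η^2) b
    have hble : (b:ℝ) ≤ (m:ℝ)/2 := by
      have h2b' : ((2*b : ℕ):ℝ) ≤ (m:ℝ) := Nat.cast_le.mpr h2b
      push_cast at h2b'
      linarith
    have h4b : 4*(b:ℝ)*η^2 ≤ 2*δ^2 := by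
      have hmul := mul_le_mul_of_nonneg_right hble (sq_nonneg η)
      linarith [hmη]
    have hδsq : 2*δ^2 ≤ 1/2 := by nlinarith [sq_nonneg δ]
    calc (1:ℝ)/2 ≤ 1 - 4*(b:ℝ)*η^2 := by linarith
      _ = 1 + (b:ℝ)*(-4*η^2) := by ring
      _ ≤ (1 + -4*η^2)^b := hber
      _ = (1 - 4*η^2)^b := by ring_nf
  -- c^a (1-c)^b ≥ (1/4 - η²)^b / 2
  have key3 : (1/4 - η^2)^b * (1/2) ≤ c^a * (1-c)^b := by
    have hsplit : c^a * (1-c)^b = (c*(1-c))^b * c^e := by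
      rw [hae, pow_add, mul_pow]; ring
    rw [hsplit]
    have hp1 : (1/4 - η^2)^b ≤ (c*(1-c))^b :=
      pow_le_pow_left₀ (le_of_lt hquarter) key1 b
    have hp2 : (1/2 : ℝ) ≤ c^e := by
      interval_cases e
      · norm_num
      · simpa using le_of_lt hc1
    have hcc : (0:ℝ) ≤ (c*(1-c))^b := by positivity
    exact mul_le_mul hp1 hp2 (by norm_num) hcc
  -- m * C * (1/4)^b ≥ √m / 2
  have hC' := central_real m hm
  have hC : (2:ℝ)^(m-1) ≤ 2 * Real.sqrt m * ((m-1).choose a : ℝ) := by rw [hA]; exact hC'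
  have hCpos : (0:ℝ) < ((m-1).choose a : ℝ) := by
    have : a ≤ m - 1 := by omega
    exact_mod_cast Nat.choose_pos this
  have key4 : Real.sqrt m / 2 ≤ (m:ℝ) * ((m-1).choose a : ℝ) * (1/4 : ℝ)^b := by
    have hpow : (2:ℝ)^(m-1) * (1/4 : ℝ)^b = 2^e := by
      have e1 : m - 1 = 2*b + e := by omega
      rw [e1, pow_add, pow_mul]
      rw [show ((2:ℝ)^2) = 4 by norm_num, show ((1:ℝ)/4) = 4⁻¹ by norm_num, inv_pow]
      rw [mul_comm ((4:ℝ)^b) ((2:ℝ)^e), mul_assoc,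
        mul_inv_cancel₀ (by positivity : ((4:ℝ)^b) ≠ 0), mul_one]
    have h2e : (1:ℝ) ≤ 2^e := by
      calc (1:ℝ) = 1^e := (one_pow e).symm
        _ ≤ 2^e := pow_le_pow_left₀ (by norm_num) (by norm_num) e
    have hq : (0:ℝ) < (1/4:ℝ)^b := by positivity
    have hmm : Real.sqrt m * Real.sqrt m = (m:ℝ) := Real.mul_self_sqrt (by linarith)
    have step : (2:ℝ)^e ≤ 2 * Real.sqrt m * ((m-1).choose a : ℝ) * (1/4:ℝ)^b := by
      rw [← hpow]
      exact mul_le_mul_of_nonneg_right hC (le_of_lt hq)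
    have step2 : (1:ℝ) ≤ 2 * Real.sqrt m * ((m-1).choose a : ℝ) * (1/4:ℝ)^b :=
      le_trans h2e step
    have h3 := mul_le_mul_of_nonneg_left step2
      (by positivity : (0:ℝ) ≤ Real.sqrt m / 2)
    calc Real.sqrt m / 2 = Real.sqrt m / 2 * 1 := by ring
      _ ≤ Real.sqrt m / 2 * (2 * Real.sqrt m * ((m-1).choose a : ℝ) * (1/4:ℝ)^b) := h3
      _ = (Real.sqrt m * Real.sqrt m) * ((m-1).choose a : ℝ) * (1/4:ℝ)^b := by ring
      _ = (m:ℝ) * ((m-1).choose a : ℝ) * (1/4:ℝ)^b := by rw [hmm]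
  -- combine
  have hfactor : (1/4 - η^2 : ℝ)^b = (1/4:ℝ)^b * (1 - 4*η^2)^b := by
    rw [← mul_pow]
    congr 1
    ring
  have hmCpos : (0:ℝ) < (m:ℝ) * ((m-1).choose a : ℝ) := by positivity
  calc Real.sqrt m / 8 = (Real.sqrt m / 2) * (1/2) * (1/2) := by ring
    _ ≤ ((m:ℝ) * ((m-1).choose a : ℝ) * (1/4:ℝ)^b) * (1/2) * (1/2) := by linarith [key4]
    _ = ((m:ℝ) * ((m-1).choose a : ℝ)) * ((1/4:ℝ)^b * (1/2) * (1/2)) := by ring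
    _ ≤ ((m:ℝ) * ((m-1).choose a : ℝ)) * ((1/4 - η^2)^b * (1/2)) := by
        apply mul_le_mul_of_nonneg_left _ (le_of_lt hmCpos)
        rw [hfactor]
        have hq : (0:ℝ) < (1/4:ℝ)^b := by positivity
        have := mul_le_mul_of_nonneg_left key2
          (le_of_lt (by positivity : (0:ℝ) < (1/4:ℝ)^b * (1/2)))
        linarith [this]
    _ ≤ ((m:ℝ) * ((m-1).choose a : ℝ)) * (c^a * (1-c)^b) := by
        apply mul_le_mul_of_nonneg_left key3 (le_of_lt hmCpos)
    _ = (m : ℝ) * (((m-1).choose a) : ℝ) * (c ^ a * (1-c) ^ b) := by ring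

end TVAux

open TVAux in
/-- The perturbed product distribution `U_M^{S, δ/√m}` is `Ω(δ)`-far from uniform
in total variation distance. -/
theorem product_tv_lower_bound :
    ∃ c δ₀ : ℝ, 0 < c ∧ 0 < δ₀ ∧
    ∀ (m M : ℕ), 0 < m → m < M →
      ∀ S : Finset (Fin M), S.card = m →
        ∀ δ : ℝ, 0 < δ → δ < δ₀ →
          c * δ ≤ dTVCube M (uniformPMF M) (prodPMF M S (δ / Real.sqrt m)) := by
  refine ⟨1/8, 1/2, by norm_num, by norm_num, ?_⟩
  intro m M hm hmM S hS δ hδ0 hδ1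
  set η := δ / Real.sqrt m with hη
  set t := m/2 + 1 with htdef
  have hm1 : 1 ≤ m := hm
  have ht1 : 1 ≤ t := by omega
  have htm : t ≤ m := by omega
  have hsm : (0:ℝ) < Real.sqrt m := Real.sqrt_pos.mpr (by exact_mod_cast hm)
  have hηpos : 0 < η := by rw [hη]; positivity
  -- event
  set A := Finset.univ.filter (fun x : Fin M → Bool => t ≤ cnt S x) with hA
  -- sums
  have hQ : ∑ x ∈ A, prodPMF M S η x = fBin m t (1/2 + η) := by
    rw [hA, sum_event, hS]
  have hP : ∑ x ∈ A, uniformPMF M x = fBin m t (1/2) := by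
    rw [uniform_eq_prod S, hA, sum_event, hS]
    norm_num
  have hdiff : ∑ x ∈ A, (prodPMF M S η x - uniformPMF M x)
      = fBin m t (1/2 + η) - fBin m t (1/2) := by
    rw [Finset.sum_sub_distrib, hQ, hP]
  -- totals
  have htot : ∑ x : Fin M → Bool, uniformPMF M x = ∑ x : Fin M → Bool, prodPMF M S η x := by
    rw [uniform_eq_prod S, sum_total, sum_total]
  -- MVT
  obtain ⟨c, hc, hce⟩ := incr m t ht1 htm η hηpos
  have ht1' : t - 1 = m/2 := by omega
  have hlb := deriv_lb m (m/2) (m - t) hm1 rfl (by omega) η δ hδ0 hδ1 hη c hc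
  rw [ht1'] at hce
  have hbound : δ / 8 ≤ fBin m t (1/2 + η) - fBin m t (1/2) := by
    rw [hce]
    have hstep : Real.sqrt m / 8
        ≤ (m : ℝ) * (((m-1).choose (m/2)) : ℝ) * (c ^ (m/2) * (1-c) ^ (m - t)) := hlb
    have hηsm : η * Real.sqrt m = δ := by
      rw [hη, div_mul_cancel₀]
      exact ne_of_gt hsm
    calc δ / 8 = η * (Real.sqrt m / 8) := by
          rw [← hηsm]; ring
      _ ≤ η * ((m : ℝ) * (((m-1).choose (m/2)) : ℝ) * (c ^ (m/2) * (1-c) ^ (m - t))) := by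
          apply mul_le_mul_of_nonneg_left hstep (le_of_lt hηpos)
  have htv := tv_ge (uniformPMF M) (prodPMF M S η) htot A
  rw [hdiff] at htv
  calc (1/8 : ℝ) * δ = δ / 8 := by ring
    _ ≤ fBin m t (1/2 + η) - fBin m t (1/2) := hbound
    _ ≤ dTVCube M (uniformPMF M) (prodPMF M S η) := htv
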